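/- Let d = ⟨d_0, …, d_{ℓ−1}⟩ be an extended regular representation of a natural number n, and let i be an index with 0 ≤ i ≤ ℓ − 1. Then 2^i ≤ n, and there exists an extended regular representation d' of n − 2^i such that the length of d' is at least ℓ − 2 and at most ℓ, and, after padding the shorter of d and d' with trailing zeros, the two strings differ in at most 4 positions. -/

import Mathlib

/-- The value `Σ_{i<ℓ} d_i · 2^i` of a digit string. -/
def digitVal (d : List ℕ) : ℕ := ∑ i ∈ Finset.range d.length, d.getD i 0 * 2 ^ i

/-- A digit string `⟨d_0, …, d_{ℓ−1}⟩` is extended regular if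
(i) every `3` is preceded by a `0` or a `1` with only `2`'s in between, and
(ii) every `0` is preceded by a `2` or a `3` with only `1`'s in between. -/
def ExtReg (d : List ℕ) : Prop :=
  (∀ j < d.length, d.getD j 0 = 3 →
      ∃ k < j, (d.getD k 0 = 0 ∨ d.getD k 0 = 1) ∧
        ∀ m, k < m → m < j → d.getD m 0 = 2) ∧
  (∀ j < d.length, d.getD j 0 = 0 →
      ∃ k < j, (d.getD k 0 = 2 ∨ d.getD k 0 = 3) ∧
        ∀ m, k < m → m < j → d.getD m 0 = 1)

/-- An extended regular representation of a natural number `n`: an extended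
regular digit string with digits at most `3`, whose last digit is nonzero
(the number `0` is represented by the empty string), and whose value is `n`. -/
def IsExtRegRep (d : List ℕ) (n : ℕ) : Prop :=
  (∀ x ∈ d, x ≤ 3) ∧ ExtReg d ∧ (d ≠ [] → d.getLastD 0 ≠ 0) ∧ digitVal d = n

/-- The number of positions at which two digit strings differ, after padding
the shorter one with trailing zeros. -/
def diffCount (d d' : List ℕ) : ℕ :=
  ((Finset.range (max d.length d'.length)).filter
    (fun k => d.getD k 0 ≠ d'.getD k 0)).card


set_option maxHeartbeats 1000000

lemma getD_set' (l : List ℕ) (i k v : ℕ) :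
    (l.set i v).getD k 0 = if i = k ∧ i < l.length then v else l.getD k 0 := by
  simp only [List.getD_eq_getElem?_getD, List.getElem?_set]
  by_cases hik : i = k
  · by_cases hl : i < l.length
    · subst hik
      simp [hl]
    · have hk : ¬ k < l.length := by omega
      simp [hik, hl, hk, List.getElem?_eq_none (le_of_not_gt hk)]
  · simp [hik]

lemma digitVal_set (l : List ℕ) (i v : ℕ) (h : i < l.length) :
    digitVal (l.set i v) + l.getD i 0 * 2 ^ i = digitVal l + v * 2 ^ i := by
  unfold digitVal
  rw [List.length_set]
  rw [← Finset.sum_erase_add _ _ (Finset.mem_range.2 h),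
      ← Finset.sum_erase_add _ _ (Finset.mem_range.2 h)]
  have h1 : ∀ x ∈ (Finset.range l.length).erase i,
      (l.set i v).getD x 0 * 2 ^ x = l.getD x 0 * 2 ^ x := by
    intro x hx
    rw [getD_set']
    rw [if_neg]
    intro hc
    exact (Finset.mem_erase.1 hx).1 hc.1.symm
  rw [Finset.sum_congr rfl h1]
  rw [getD_set', if_pos ⟨rfl, h⟩]
  ring

def trim (l : List ℕ) : List ℕ := (l.reverse.dropWhile (· == 0)).reverse

lemma trim_decomp (l : List ℕ) : ∃ m, l = trim l ++ List.replicate m 0 := by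
  refine ⟨(l.reverse.takeWhile (· == 0)).length, ?_⟩
  have h1 : l.reverse.takeWhile (· == 0)
      = List.replicate (l.reverse.takeWhile (· == 0)).length 0 := by
    apply List.eq_replicate_of_mem
    intro b hb
    have := List.mem_takeWhile_imp hb
    simpa using this
  conv_lhs => rw [← l.reverse_reverse, ← List.takeWhile_append_dropWhile (p := (· == 0)) (l := l.reverse)]
  rw [List.reverse_append, h1]
  simp [trim]

lemma trim_last (l : List ℕ) (h : trim l ≠ []) : (trim l).getLastD 0 ≠ 0 := by
  unfold trim at *
  have h2 := List.head?_dropWhile_not (· == 0) l.reverse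
  rcases hd : (l.reverse.dropWhile (· == 0)).head? with _ | x
  · rw [List.head?_eq_none_iff] at hd
    simp [hd] at h
  · rw [hd] at h2
    simp only [List.getLastD_eq_getLast?, List.getLast?_reverse, hd]
    simpa using h2

lemma trim_length_le (l : List ℕ) : (trim l).length ≤ l.length := by
  obtain ⟨m, hm⟩ := trim_decomp l
  conv_rhs => rw [hm]
  simp

lemma trim_getD (l : List ℕ) (k : ℕ) : (trim l).getD k 0 = l.getD k 0 := by
  obtain ⟨m, hm⟩ := trim_decomp l
  conv_rhs => rw [hm]
  by_cases h : k < (trim l).length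
  · rw [List.getD_eq_getElem?_getD, List.getD_eq_getElem?_getD,
      List.getElem?_append_left h]
  · rw [List.getD_eq_default _ _ (le_of_not_gt h), List.getD_eq_getElem?_getD]
    rw [List.getElem?_append_right (le_of_not_gt h)]
    rcases Nat.lt_or_ge (k - (trim l).length) m with h2 | h2
    · simp [List.getElem?_replicate, h2]
    · rw [List.getElem?_eq_none (by simpa using h2)]
      rfl

lemma lt_trim_length (l : List ℕ) (k : ℕ) (h : l.getD k 0 ≠ 0) : k < (trim l).length := by
  by_contra hc
  rw [← trim_getD] at h
  exact h (List.getD_eq_default _ _ (le_of_not_gt hc))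

lemma digitVal_trim (l : List ℕ) : digitVal (trim l) = digitVal l := by
  unfold digitVal
  rw [← Finset.sum_range_add_sum_Ico _ (trim_length_le l)]
  have h0 : ∀ x ∈ Finset.Ico (trim l).length l.length, l.getD x 0 * 2 ^ x = 0 := by
    intro x hx
    rw [Finset.mem_Ico] at hx
    rw [← trim_getD, List.getD_eq_default _ _ hx.1]
    ring
  rw [Finset.sum_congr rfl h0, Finset.sum_const_zero, add_zero]
  exact Finset.sum_congr rfl fun x _ => by rw [trim_getD]

lemma mem_trim (l : List ℕ) (x : ℕ) (h : x ∈ trim l) : x ∈ l := by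
  unfold trim at h
  rw [List.mem_reverse] at h
  exact List.mem_reverse.1 ((List.dropWhile_sublist _).mem h)

lemma trim_length_le_of (l : List ℕ) (t : ℕ) (h : ∀ m, t ≤ m → l.getD m 0 = 0) :
    (trim l).length ≤ t := by
  by_contra hc
  push_neg at hc
  have hne : trim l ≠ [] := by
    intro he
    rw [he] at hc
    simp at hc
  have hlast := trim_last l hne
  rw [List.getLastD_eq_getLast?, List.getLast?_eq_getElem?] at hlast
  have : (trim l).getD ((trim l).length - 1) 0 ≠ 0 := by
    rw [List.getD_eq_getElem?_getD]
    exact hlast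
  rw [trim_getD] at this
  exact this (h _ (by omega))

lemma extReg_of_agree (c e : List ℕ) (hlen : e.length ≤ c.length)
    (hag : ∀ k < e.length, e.getD k 0 = c.getD k 0) (h : ExtReg c) : ExtReg e := by
  constructor
  · intro j hj h3
    obtain ⟨k, hk, hkd, hch⟩ := h.1 j (lt_of_lt_of_le hj hlen) (by rw [← hag j hj]; exact h3)
    exact ⟨k, hk, by rw [hag k (hk.trans hj)]; exact hkd,
      fun m h1 h2 => by rw [hag m (h2.trans hj)]; exact hch m h1 h2⟩
  · intro j hj h0
    obtain ⟨k, hk, hkd, hch⟩ := h.2 j (lt_of_lt_of_le hj hlen) (by rw [← hag j hj]; exact h0)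
    exact ⟨k, hk, by rw [hag k (hk.trans hj)]; exact hkd,
      fun m h1 h2 => by rw [hag m (h2.trans hj)]; exact hch m h1 h2⟩

lemma getLastD_eq_getD (l : List ℕ) (h : l ≠ []) : l.getLastD 0 = l.getD (l.length - 1) 0 := by
  rw [List.getLastD_eq_getLast?, List.getLast?_eq_getElem?, List.getD_eq_getElem?_getD]

lemma no_adjacent_zeros (c : List ℕ) (h : ExtReg c) (j : ℕ) (hj : c.getD j 0 = 0)
    (hj1 : j + 1 < c.length) : c.getD (j+1) 0 ≠ 0 := by
  intro h0
  obtain ⟨k, hk, hkd, hch⟩ := h.2 (j+1) hj1 h0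
  rcases Nat.lt_or_ge k j with h1 | h1
  · have := hch j h1 (Nat.lt_succ_self j)
    omega
  · have : k = j := by omega
    subst this
    rcases hkd with h2 | h2 <;> omega

lemma zero_lt_last (c : List ℕ) (hlast : c ≠ [] → c.getLastD 0 ≠ 0) (j : ℕ)
    (hjl : j < c.length) (hj : c.getD j 0 = 0) : j + 1 < c.length := by
  have hne : c ≠ [] := by
    intro h
    rw [h] at hjl
    simp at hjl
  have hl := hlast hne
  rw [getLastD_eq_getD _ hne] at hl
  rcases Nat.lt_or_ge (j+1) c.length with h | h
  · exact h
  · have : j = c.length - 1 := by omega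
    subst this
    exact absurd hj hl

lemma getD_le_digitVal (l : List ℕ) (k : ℕ) (h : k < l.length) :
    l.getD k 0 * 2 ^ k ≤ digitVal l := by
  unfold digitVal
  exact Finset.single_le_sum (f := fun i => l.getD i 0 * 2 ^ i)
    (fun i _ => Nat.zero_le _) (Finset.mem_range.2 h)

/-- The conclusion of the one-position decrement lemma. -/
def DecResult (c : List ℕ) (p : ℕ) : Prop :=
  ∃ (d' : List ℕ) (S' : Finset ℕ), (∀ x ∈ d', x ≤ 3) ∧ ExtReg d' ∧
    (d' ≠ [] → d'.getLastD 0 ≠ 0) ∧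
    digitVal d' + 2 ^ p = digitVal c ∧ c.length - 2 ≤ d'.length ∧
    d'.length ≤ c.length ∧ S'.card ≤ 3 ∧ ∀ k, k ∉ S' → d'.getD k 0 = c.getD k 0

lemma finish (c e : List ℕ) (p : ℕ) (S : Finset ℕ)
    (hlen : e.length = c.length)
    (hmem : ∀ x ∈ e, x ≤ 3)
    (hregt : ExtReg (trim e))
    (hval : digitVal e + 2 ^ p = digitVal c)
    (hS : S.card ≤ 3)
    (hag : ∀ k, k ∉ S → e.getD k 0 = c.getD k 0)
    (hlow : c.length ≤ 2 ∨ ∃ k, k + 3 ≥ c.length ∧ e.getD k 0 ≠ 0) :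
    DecResult c p := by
  refine ⟨trim e, S, ?_, hregt, trim_last e, ?_, ?_, ?_, hS, ?_⟩
  · intro x hx
    exact hmem x (mem_trim e x hx)
  · rw [digitVal_trim]
    exact hval
  · rcases hlow with h | ⟨k, hk1, hk2⟩
    · omega
    · have := lt_trim_length e k hk2
      omega
  · exact le_trans (trim_length_le e) (le_of_eq hlen)
  · intro k hk
    rw [trim_getD]
    exact hag k hk

lemma top_nonzero (c : List ℕ) (hlast : c ≠ [] → c.getLastD 0 ≠ 0) (h0 : 0 < c.length) :
    c.getD (c.length - 1) 0 ≠ 0 := by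
  have hne : c ≠ [] := List.ne_nil_of_length_pos h0
  have := hlast hne
  rwa [getLastD_eq_getD _ hne] at this

lemma mem_set_le_three (c : List ℕ) (i v : ℕ) (h3 : ∀ x ∈ c, x ≤ 3) (hv : v ≤ 3) :
    ∀ x ∈ c.set i v, x ≤ 3 := by
  intro x hx
  rcases List.mem_or_eq_of_mem_set hx with h | h
  · exact h3 x h
  · omega

lemma decpos_v3 (c : List ℕ) (p : ℕ) (h3 : ∀ x ∈ c, x ≤ 3) (hreg : ExtReg c)
    (hlast : c ≠ [] → c.getLastD 0 ≠ 0) (hp : p < c.length) (hv : c.getD p 0 = 3) :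
    DecResult c p := by
  set e := c.set p 2 with hedef
  have hlen : e.length = c.length := by simp [hedef]
  have he : ∀ k, e.getD k 0 = if k = p then 2 else c.getD k 0 := by
    intro k
    rw [hedef, getD_set']
    split_ifs <;> first | rfl | omega
  have heq : ∀ k, k ≠ p → e.getD k 0 = c.getD k 0 := by
    intro k h
    rw [he k, if_neg h]
  have hep : e.getD p 0 = 2 := by rw [he]; simp
  have hval : digitVal e + 2 ^ p = digitVal c := by
    have h := digitVal_set c p 2 hp
    rw [hv, ← hedef] at h
    omega
  have hrege : ExtReg e := by
    constructor
    · intro j₀ hj₀ h3e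
      rw [hlen] at hj₀
      rcases eq_or_ne j₀ p with rfl | h1
      · rw [hep] at h3e
        omega
      · rw [heq _ h1] at h3e
        obtain ⟨k, hk, hkd, hch⟩ := hreg.1 j₀ hj₀ h3e
        have hkp : k ≠ p := by
          intro h
          subst h
          rcases hkd with h | h <;> omega
        have hpi : ¬(k < p ∧ p < j₀) := by
          rintro ⟨a, b⟩
          have := hch p a b
          omega
        exact ⟨k, hk, by rw [heq k hkp]; exact hkd, fun m hm1 hm2 => by
          rw [heq m (by intro h; subst h; exact hpi ⟨hm1, hm2⟩)]; exact hch m hm1 hm2⟩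
    · intro j₀ hj₀ h0e
      rw [hlen] at hj₀
      rcases eq_or_ne j₀ p with rfl | h1
      · rw [hep] at h0e
        omega
      · rw [heq _ h1] at h0e
        obtain ⟨k, hk, hkd, hch⟩ := hreg.2 j₀ hj₀ h0e
        by_cases hkp : k = p
        · subst hkp
          exact ⟨k, hk, Or.inl hep, fun m hm1 hm2 => by
            rw [heq m (by omega)]; exact hch m hm1 hm2⟩
        · have hpi : ¬(k < p ∧ p < j₀) := by
            rintro ⟨a, b⟩
            have := hch p a b
            omega
          exact ⟨k, hk, by rw [heq k hkp]; exact hkd, fun m hm1 hm2 => by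
            rw [heq m (by intro h; subst h; exact hpi ⟨hm1, hm2⟩)]; exact hch m hm1 hm2⟩
  refine finish c e p {p} hlen (mem_set_le_three c p 2 h3 (by omega)) ?_ hval (by simp) ?_ ?_
  · exact extReg_of_agree e (trim e) (trim_length_le e) (fun k _ => trim_getD e k) hrege
  · intro k hk
    exact heq k (by simpa using hk)
  · right
    refine ⟨c.length - 1, by omega, ?_⟩
    by_cases hpl : p = c.length - 1
    · rw [← hpl, hep]
      omega
    · rw [heq _ (by omega)]
      exact top_nonzero c hlast (by omega)

lemma getD_le_three (c : List ℕ) (h3 : ∀ x ∈ c, x ≤ 3) (k : ℕ) : c.getD k 0 ≤ 3 := by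
  rcases Nat.lt_or_ge k c.length with h | h
  · rw [List.getD_eq_getElem c 0 h]
    exact h3 _ (List.getElem_mem h)
  · rw [List.getD_eq_default _ _ h]
    omega

lemma decpos_v2bad (c : List ℕ) (p j : ℕ) (h3 : ∀ x ∈ c, x ≤ 3) (hreg : ExtReg c)
    (hlast : c ≠ [] → c.getLastD 0 ≠ 0) (hp : p < c.length) (hv : c.getD p 0 = 2)
    (hpj : p < j) (hjl : j < c.length) (hj0 : c.getD j 0 = 0)
    (hchain : ∀ m, p < m → m < j → c.getD m 0 = 1) : DecResult c p := by
  have hj1l : j + 1 < c.length := zero_lt_last c hlast j hjl hj0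
  obtain ⟨w, hwdef⟩ : ∃ w, w = c.getD (j+1) 0 := ⟨_, rfl⟩
  have hw1 : 1 ≤ w := by
    have := no_adjacent_zeros c hreg j hj0 hj1l
    omega
  have hw3 : w ≤ 3 := by
    have := getD_le_three c h3 (j+1)
    omega
  set e := ((c.set p 1).set j 2).set (j+1) (w-1) with hedef
  have hlen : e.length = c.length := by simp [hedef]
  have he : ∀ k, e.getD k 0
      = if k = p then 1 else if k = j then 2 else if k = j+1 then w - 1
        else c.getD k 0 := by
    intro k
    rw [hedef, getD_set', getD_set', getD_set']
    simp only [List.length_set]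
    split_ifs <;> omega
  have heq : ∀ k, k ≠ p → k ≠ j → k ≠ j+1 → e.getD k 0 = c.getD k 0 := by
    intro k h1 h2 h3x
    rw [he k, if_neg h1, if_neg h2, if_neg h3x]
  have hep : e.getD p 0 = 1 := by rw [he]; simp
  have hej : e.getD j 0 = 2 := by
    rw [he j, if_neg (by omega), if_pos rfl]
  have hej1 : e.getD (j+1) 0 = w - 1 := by
    rw [he (j+1), if_neg (by omega), if_neg (by omega), if_pos rfl]
  have hmem : ∀ x ∈ e, x ≤ 3 := by
    rw [hedef]
    exact mem_set_le_three _ _ _ (mem_set_le_three _ _ _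
      (mem_set_le_three _ _ _ h3 (by omega)) (by omega)) (by omega)
  have hval : digitVal e + 2 ^ p = digitVal c := by
    have h1 := digitVal_set c p 1 hp
    rw [hv] at h1
    have h2 := digitVal_set (c.set p 1) j 2 (by simp; omega)
    rw [getD_set', if_neg (by omega), hj0] at h2
    have h3v := digitVal_set ((c.set p 1).set j 2) (j+1) (w-1) (by simp; omega)
    rw [getD_set', if_neg (by omega), getD_set', if_neg (by omega), ← hwdef, ← hedef] at h3v
    have hpow : 2 ^ (j+1) = 2 * 2 ^ j := by rw [pow_succ]; ring
    rcases (by omega : w = 1 ∨ w = 2 ∨ w = 3) with rfl | rfl | rfl <;> omega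
  have hrege : ExtReg e := by
    constructor
    · intro j₀ hj₀ h3e
      rw [hlen] at hj₀
      rcases eq_or_ne j₀ p with rfl | hne1
      · rw [hep] at h3e; omega
      rcases eq_or_ne j₀ j with rfl | hne2
      · rw [hej] at h3e; omega
      rcases eq_or_ne j₀ (j+1) with rfl | hne3
      · rw [hej1] at h3e; omega
      rw [heq _ hne1 hne2 hne3] at h3e
      obtain ⟨k, hk, hkd, hch⟩ := hreg.1 j₀ hj₀ h3e
      have hkp : k ≠ p := by
        intro h
        subst h
        rcases hkd with h | h <;> omega
      rcases eq_or_ne k j with hkj | hkj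
      · rw [hkj] at hk hkd hch
        have hj₀j : j + 1 < j₀ := by omega
        have hcj1 : c.getD (j+1) 0 = 2 := hch (j+1) (by omega) hj₀j
        refine ⟨j+1, hj₀j, Or.inr (by rw [hej1]; omega), fun m hm1 hm2 => ?_⟩
        rw [heq m (by omega) (by omega) (by omega)]
        exact hch m (by omega) hm2
      rcases eq_or_ne k (j+1) with hkj1 | hkj1
      · rw [hkj1] at hk hkd hch
        refine ⟨j+1, hk, Or.inl (by rw [hej1]; omega), fun m hm1 hm2 => ?_⟩
        rw [heq m (by omega) (by omega) (by omega)]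
        exact hch m hm1 hm2
      by_cases hpi : k < p ∧ p < j₀
      · have hjout : j₀ < j := by
          by_contra hcon
          have := hch j (by omega) (by omega)
          omega
        refine ⟨p, hpi.2, Or.inr hep, fun m hm1 hm2 => ?_⟩
        rw [heq m (by omega) (by omega) (by omega)]
        exact hch m (by omega) hm2
      · have hside : p < k ∨ j₀ ≤ p := by omega
        have hjni : j ≤ k ∨ j₀ ≤ j := by
          by_contra hcon
          push_neg at hcon
          have := hch j (by omega) (by omega)
          omega
        have hj1ni : j + 1 ≤ k ∨ j₀ ≤ j + 1 := by omega
        refine ⟨k, hk, by rw [heq k hkp hkj hkj1]; exact hkd, fun m hm1 hm2 => ?_⟩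
        rw [heq m (by omega) (by omega) (by omega)]
        exact hch m hm1 hm2
    · intro j₀ hj₀ h0e
      rw [hlen] at hj₀
      rcases eq_or_ne j₀ p with rfl | hne1
      · rw [hep] at h0e; omega
      rcases eq_or_ne j₀ j with rfl | hne2
      · rw [hej] at h0e; omega
      rcases eq_or_ne j₀ (j+1) with rfl | hne3
      · exact ⟨j, by omega, Or.inl hej, fun m hm1 hm2 => by omega⟩
      rw [heq _ hne1 hne2 hne3] at h0e
      obtain ⟨k, hk, hkd, hch⟩ := hreg.2 j₀ hj₀ h0e
      rcases eq_or_ne k p with hkp | hkp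
      · rw [hkp] at hk hkd hch
        exfalso
        rcases Nat.lt_trichotomy j j₀ with h | h | h
        · have := hch j hpj h
          omega
        · omega
        · have := hchain j₀ (by omega) h
          omega
      rcases eq_or_ne k j with hkj | hkj
      · rw [hkj] at hkd
        exfalso
        rcases hkd with h | h <;> omega
      rcases eq_or_ne k (j+1) with hkj1 | hkj1
      · rw [hkj1] at hk hkd hch
        rcases hkd with h2 | h3x
        · refine ⟨j, by omega, Or.inl hej, fun m hm1 hm2 => ?_⟩
          rcases eq_or_ne m (j+1) with rfl | hmne
          · rw [hej1]; omega
          · rw [heq m (by omega) (by omega) hmne]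
            exact hch m (by omega) hm2
        · refine ⟨j+1, hk, Or.inl (by rw [hej1]; omega), fun m hm1 hm2 => ?_⟩
          rw [heq m (by omega) (by omega) (by omega)]
          exact hch m hm1 hm2
      by_cases hpi : k < p ∧ p < j₀
      · exfalso
        have := hch p hpi.1 hpi.2
        omega
      · have hside : p < k ∨ j₀ ≤ p := by omega
        have hjni : j ≤ k ∨ j₀ ≤ j := by
          by_contra hcon
          push_neg at hcon
          have := hch j (by omega) (by omega)
          omega
        have hj1ni : j + 1 ≤ k ∨ j₀ ≤ j + 1 := by omega
        refine ⟨k, hk, by rw [heq k hkp hkj hkj1]; exact hkd, fun m hm1 hm2 => ?_⟩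
        rw [heq m (by omega) (by omega) (by omega)]
        exact hch m hm1 hm2
  have hcard : ({p, j, j+1} : Finset ℕ).card ≤ 3 := by
    have h1 := Finset.card_insert_le p ({j, j+1} : Finset ℕ)
    have h2 := Finset.card_insert_le j ({j+1} : Finset ℕ)
    have h3c : ({j+1} : Finset ℕ).card = 1 := Finset.card_singleton _
    omega
  refine finish c e p {p, j, j+1} hlen hmem ?_ hval hcard ?_ ?_
  · exact extReg_of_agree e (trim e) (trim_length_le e) (fun k _ => trim_getD e k) hrege
  · intro k hk
    simp only [Finset.mem_insert, Finset.mem_singleton] at hk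
    push_neg at hk
    exact heq k hk.1 hk.2.1 hk.2.2
  · right
    by_cases he1 : e.getD (c.length - 1) 0 ≠ 0
    · exact ⟨c.length - 1, by omega, he1⟩
    · push_neg at he1
      have hl1 : c.length - 1 = j + 1 := by
        by_contra hc2
        rcases eq_or_ne (c.length - 1) p with h | hh1
        · rw [h, hep] at he1; omega
        rcases eq_or_ne (c.length - 1) j with h | hh2
        · rw [h, hej] at he1; omega
        rw [heq _ hh1 hh2 hc2] at he1
        exact top_nonzero c hlast (by omega) he1
      exact ⟨j, by omega, by rw [hej]; omega⟩

lemma decpos_v2nobad (c : List ℕ) (p : ℕ) (h3 : ∀ x ∈ c, x ≤ 3) (hreg : ExtReg c)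
    (hlast : c ≠ [] → c.getLastD 0 ≠ 0) (hp : p < c.length) (hv : c.getD p 0 = 2)
    (hnobad : ¬∃ j, p < j ∧ j < c.length ∧ c.getD j 0 = 0 ∧
      ∀ m, p < m → m < j → c.getD m 0 = 1) : DecResult c p := by
  set e := c.set p 1 with hedef
  have hlen : e.length = c.length := by simp [hedef]
  have he : ∀ k, e.getD k 0 = if k = p then 1 else c.getD k 0 := by
    intro k
    rw [hedef, getD_set']
    split_ifs <;> omega
  have heq : ∀ k, k ≠ p → e.getD k 0 = c.getD k 0 := by
    intro k h
    rw [he k, if_neg h]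
  have hep : e.getD p 0 = 1 := by rw [he]; simp
  have hval : digitVal e + 2 ^ p = digitVal c := by
    have h1 := digitVal_set c p 1 hp
    rw [hv, ← hedef] at h1
    omega
  have hrege : ExtReg e := by
    constructor
    · intro j₀ hj₀ h3e
      rw [hlen] at hj₀
      rcases eq_or_ne j₀ p with rfl | hne1
      · rw [hep] at h3e; omega
      rw [heq _ hne1] at h3e
      obtain ⟨k, hk, hkd, hch⟩ := hreg.1 j₀ hj₀ h3e
      have hkp : k ≠ p := by
        intro h
        rw [h] at hkd
        rcases hkd with h | h <;> omega
      by_cases hpi : k < p ∧ p < j₀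
      · refine ⟨p, hpi.2, Or.inr hep, fun m hm1 hm2 => ?_⟩
        rw [heq m (by omega)]
        exact hch m (by omega) hm2
      · refine ⟨k, hk, by rw [heq k hkp]; exact hkd, fun m hm1 hm2 => ?_⟩
        rw [heq m (by omega)]
        exact hch m hm1 hm2
    · intro j₀ hj₀ h0e
      rw [hlen] at hj₀
      rcases eq_or_ne j₀ p with rfl | hne1
      · rw [hep] at h0e; omega
      rw [heq _ hne1] at h0e
      obtain ⟨k, hk, hkd, hch⟩ := hreg.2 j₀ hj₀ h0e
      rcases eq_or_ne k p with hkp | hkp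
      · exfalso
        rw [hkp] at hk hch
        exact hnobad ⟨j₀, hk, hj₀, h0e, fun m hm1 hm2 => hch m hm1 hm2⟩
      by_cases hpi : k < p ∧ p < j₀
      · exfalso
        have := hch p hpi.1 hpi.2
        omega
      · refine ⟨k, hk, by rw [heq k hkp]; exact hkd, fun m hm1 hm2 => ?_⟩
        rw [heq m (by omega)]
        exact hch m hm1 hm2
  refine finish c e p {p} hlen (by rw [hedef]; exact mem_set_le_three _ _ _ h3 (by omega)) ?_
    hval (by simp) ?_ ?_
  · exact extReg_of_agree e (trim e) (trim_length_le e) (fun k _ => trim_getD e k) hrege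
  · intro k hk
    exact heq k (by simpa using hk)
  · right
    refine ⟨c.length - 1, by omega, ?_⟩
    rcases eq_or_ne (c.length - 1) p with h | h
    · rw [h, hep]; omega
    · rw [heq _ h]
      exact top_nonzero c hlast (by omega)

lemma decpos_v1bad (c : List ℕ) (p j : ℕ) (h3 : ∀ x ∈ c, x ≤ 3) (hreg : ExtReg c)
    (hlast : c ≠ [] → c.getLastD 0 ≠ 0) (hp : p < c.length) (hv : c.getD p 0 = 1)
    (hpj : p < j) (hjl : j < c.length) (hj0 : c.getD j 0 = 0)
    (hchain : ∀ m, p < m → m < j → c.getD m 0 = 1) : DecResult c p := by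
  have hj1l : j + 1 < c.length := zero_lt_last c hlast j hjl hj0
  obtain ⟨w, hwdef⟩ : ∃ w, w = c.getD (j+1) 0 := ⟨_, rfl⟩
  have hw1 : 1 ≤ w := by
    have := no_adjacent_zeros c hreg j hj0 hj1l
    omega
  have hw3 : w ≤ 3 := by
    have := getD_le_three c h3 (j+1)
    omega
  -- the witness below p for the zero at j
  obtain ⟨k₀, hk₀, hk₀d, hch₀⟩ := hreg.2 j hjl hj0
  have hk₀p : k₀ < p := by
    rcases Nat.lt_trichotomy k₀ p with h | h | h
    · exact h
    · rw [h] at hk₀d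
      omega
    · have := hchain k₀ h hk₀
      omega
  set e := ((c.set p 0).set j 2).set (j+1) (w-1) with hedef
  have hlen : e.length = c.length := by simp [hedef]
  have he : ∀ k, e.getD k 0
      = if k = p then 0 else if k = j then 2 else if k = j+1 then w - 1
        else c.getD k 0 := by
    intro k
    rw [hedef, getD_set', getD_set', getD_set']
    simp only [List.length_set]
    split_ifs <;> omega
  have heq : ∀ k, k ≠ p → k ≠ j → k ≠ j+1 → e.getD k 0 = c.getD k 0 := by
    intro k h1 h2 h3x
    rw [he k, if_neg h1, if_neg h2, if_neg h3x]
  have hep : e.getD p 0 = 0 := by rw [he]; simp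
  have hej : e.getD j 0 = 2 := by
    rw [he j, if_neg (by omega), if_pos rfl]
  have hej1 : e.getD (j+1) 0 = w - 1 := by
    rw [he (j+1), if_neg (by omega), if_neg (by omega), if_pos rfl]
  have hmem : ∀ x ∈ e, x ≤ 3 := by
    rw [hedef]
    exact mem_set_le_three _ _ _ (mem_set_le_three _ _ _
      (mem_set_le_three _ _ _ h3 (by omega)) (by omega)) (by omega)
  have hval : digitVal e + 2 ^ p = digitVal c := by
    have h1 := digitVal_set c p 0 hp
    rw [hv] at h1
    have h2 := digitVal_set (c.set p 0) j 2 (by simp; omega)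
    rw [getD_set', if_neg (by omega), hj0] at h2
    have h3v := digitVal_set ((c.set p 0).set j 2) (j+1) (w-1) (by simp; omega)
    rw [getD_set', if_neg (by omega), getD_set', if_neg (by omega), ← hwdef, ← hedef] at h3v
    have hpow : 2 ^ (j+1) = 2 * 2 ^ j := by rw [pow_succ]; ring
    rcases (by omega : w = 1 ∨ w = 2 ∨ w = 3) with rfl | rfl | rfl <;> omega
  have hrege : ExtReg e := by
    constructor
    · intro j₀ hj₀ h3e
      rw [hlen] at hj₀
      rcases eq_or_ne j₀ p with rfl | hne1
      · rw [hep] at h3e; omega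
      rcases eq_or_ne j₀ j with rfl | hne2
      · rw [hej] at h3e; omega
      rcases eq_or_ne j₀ (j+1) with rfl | hne3
      · rw [hej1] at h3e; omega
      rw [heq _ hne1 hne2 hne3] at h3e
      obtain ⟨k, hk, hkd, hch⟩ := hreg.1 j₀ hj₀ h3e
      rcases eq_or_ne k p with hkp | hkp
      · -- the old witness is p itself; the new 0 at p is still a valid witness
        rw [hkp] at hk hch
        have hjout : j₀ < j := by
          by_contra hcon
          have := hch j (by omega) (by omega)
          omega
        refine ⟨p, hk, Or.inl hep, fun m hm1 hm2 => ?_⟩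
        rw [heq m (by omega) (by omega) (by omega)]
        exact hch m hm1 hm2
      rcases eq_or_ne k j with hkj | hkj
      · rw [hkj] at hk hkd hch
        have hj₀j : j + 1 < j₀ := by omega
        have hcj1 : c.getD (j+1) 0 = 2 := hch (j+1) (by omega) hj₀j
        refine ⟨j+1, hj₀j, Or.inr (by rw [hej1]; omega), fun m hm1 hm2 => ?_⟩
        rw [heq m (by omega) (by omega) (by omega)]
        exact hch m (by omega) hm2
      rcases eq_or_ne k (j+1) with hkj1 | hkj1
      · rw [hkj1] at hk hkd hch
        refine ⟨j+1, hk, Or.inl (by rw [hej1]; omega), fun m hm1 hm2 => ?_⟩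
        rw [heq m (by omega) (by omega) (by omega)]
        exact hch m hm1 hm2
      by_cases hpi : k < p ∧ p < j₀
      · exfalso
        have := hch p hpi.1 hpi.2
        omega
      · have hside : p < k ∨ j₀ ≤ p := by omega
        have hjni : j ≤ k ∨ j₀ ≤ j := by
          by_contra hcon
          push_neg at hcon
          have := hch j (by omega) (by omega)
          omega
        have hj1ni : j + 1 ≤ k ∨ j₀ ≤ j + 1 := by omega
        refine ⟨k, hk, by rw [heq k hkp hkj hkj1]; exact hkd, fun m hm1 hm2 => ?_⟩
        rw [heq m (by omega) (by omega) (by omega)]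
        exact hch m hm1 hm2
    · intro j₀ hj₀ h0e
      rw [hlen] at hj₀
      rcases eq_or_ne j₀ p with heqp | hne1
      · -- the new zero at p: use the witness k₀ of the zero at j
        refine ⟨k₀, by omega, by rw [heq k₀ (by omega) (by omega) (by omega)]; exact hk₀d,
          fun m hm1 hm2 => ?_⟩
        rw [heq m (by omega) (by omega) (by omega)]
        exact hch₀ m hm1 (by omega)
      rcases eq_or_ne j₀ j with rfl | hne2
      · rw [hej] at h0e; omega
      rcases eq_or_ne j₀ (j+1) with rfl | hne3
      · exact ⟨j, by omega, Or.inl hej, fun m hm1 hm2 => by omega⟩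
      rw [heq _ hne1 hne2 hne3] at h0e
      obtain ⟨k, hk, hkd, hch⟩ := hreg.2 j₀ hj₀ h0e
      rcases eq_or_ne k p with hkp | hkp
      · exfalso
        rw [hkp] at hkd
        omega
      rcases eq_or_ne k j with hkj | hkj
      · rw [hkj] at hkd
        exfalso
        rcases hkd with h | h <;> omega
      rcases eq_or_ne k (j+1) with hkj1 | hkj1
      · rw [hkj1] at hk hkd hch
        rcases hkd with h2 | h3x
        · refine ⟨j, by omega, Or.inl hej, fun m hm1 hm2 => ?_⟩
          rcases eq_or_ne m (j+1) with rfl | hmne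
          · rw [hej1]; omega
          · rw [heq m (by omega) (by omega) hmne]
            exact hch m (by omega) hm2
        · refine ⟨j+1, hk, Or.inl (by rw [hej1]; omega), fun m hm1 hm2 => ?_⟩
          rw [heq m (by omega) (by omega) (by omega)]
          exact hch m hm1 hm2
      by_cases hpi : k < p ∧ p < j₀
      · exfalso
        rcases Nat.lt_trichotomy j j₀ with h | h | h
        · have := hch j (by omega) h
          omega
        · omega
        · have := hchain j₀ (by omega) h
          omega
      · have hside : p < k ∨ j₀ ≤ p := by omega
        have hjni : j ≤ k ∨ j₀ ≤ j := by
          by_contra hcon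
          push_neg at hcon
          have := hch j (by omega) (by omega)
          omega
        have hj1ni : j + 1 ≤ k ∨ j₀ ≤ j + 1 := by omega
        refine ⟨k, hk, by rw [heq k hkp hkj hkj1]; exact hkd, fun m hm1 hm2 => ?_⟩
        rw [heq m (by omega) (by omega) (by omega)]
        exact hch m hm1 hm2
  have hcard : ({p, j, j+1} : Finset ℕ).card ≤ 3 := by
    have h1 := Finset.card_insert_le p ({j, j+1} : Finset ℕ)
    have h2 := Finset.card_insert_le j ({j+1} : Finset ℕ)
    have h3c : ({j+1} : Finset ℕ).card = 1 := Finset.card_singleton _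
    omega
  refine finish c e p {p, j, j+1} hlen hmem ?_ hval hcard ?_ ?_
  · exact extReg_of_agree e (trim e) (trim_length_le e) (fun k _ => trim_getD e k) hrege
  · intro k hk
    simp only [Finset.mem_insert, Finset.mem_singleton] at hk
    push_neg at hk
    exact heq k hk.1 hk.2.1 hk.2.2
  · right
    by_cases he1 : e.getD (c.length - 1) 0 ≠ 0
    · exact ⟨c.length - 1, by omega, he1⟩
    · push_neg at he1
      have hl1 : c.length - 1 = j + 1 := by
        by_contra hc2
        rcases eq_or_ne (c.length - 1) p with h | hh1
        · omega
        rcases eq_or_ne (c.length - 1) j with h | hh2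
        · rw [h, hej] at he1; omega
        rw [heq _ hh1 hh2 hc2] at he1
        exact top_nonzero c hlast (by omega) he1
      exact ⟨j, by omega, by rw [hej]; omega⟩

lemma decpos_v1wit (c : List ℕ) (p : ℕ) (h3 : ∀ x ∈ c, x ≤ 3) (hreg : ExtReg c)
    (hlast : c ≠ [] → c.getLastD 0 ≠ 0) (hp : p + 1 < c.length) (hv : c.getD p 0 = 1)
    (hnobad : ¬∃ j, p < j ∧ j < c.length ∧ c.getD j 0 = 0 ∧
      ∀ m, p < m → m < j → c.getD m 0 = 1)
    (hwit : ∃ k₁, k₁ < p ∧ (c.getD k₁ 0 = 2 ∨ c.getD k₁ 0 = 3) ∧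
      ∀ m, k₁ < m → m < p → c.getD m 0 = 1) : DecResult c p := by
  obtain ⟨k₁, hk₁, hk₁d, hch₁⟩ := hwit
  set e := c.set p 0 with hedef
  have hlen : e.length = c.length := by simp [hedef]
  have he : ∀ k, e.getD k 0 = if k = p then 0 else c.getD k 0 := by
    intro k
    rw [hedef, getD_set']
    split_ifs <;> omega
  have heq : ∀ k, k ≠ p → e.getD k 0 = c.getD k 0 := by
    intro k h
    rw [he k, if_neg h]
  have hep : e.getD p 0 = 0 := by rw [he]; simp
  have hval : digitVal e + 2 ^ p = digitVal c := by
    have h1 := digitVal_set c p 0 (by omega)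
    rw [hv, ← hedef] at h1
    omega
  have hrege : ExtReg e := by
    constructor
    · intro j₀ hj₀ h3e
      rw [hlen] at hj₀
      rcases eq_or_ne j₀ p with rfl | hne1
      · rw [hep] at h3e; omega
      rw [heq _ hne1] at h3e
      obtain ⟨k, hk, hkd, hch⟩ := hreg.1 j₀ hj₀ h3e
      rcases eq_or_ne k p with hkp | hkp
      · rw [hkp] at hk hch
        refine ⟨p, hk, Or.inl hep, fun m hm1 hm2 => ?_⟩
        rw [heq m (by omega)]
        exact hch m hm1 hm2
      by_cases hpi : k < p ∧ p < j₀
      · exfalso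
        have := hch p hpi.1 hpi.2
        omega
      · refine ⟨k, hk, by rw [heq k hkp]; exact hkd, fun m hm1 hm2 => ?_⟩
        rw [heq m (by omega)]
        exact hch m hm1 hm2
    · intro j₀ hj₀ h0e
      rw [hlen] at hj₀
      rcases eq_or_ne j₀ p with heqp | hne1
      · refine ⟨k₁, by omega, by rw [heq k₁ (by omega)]; exact hk₁d, fun m hm1 hm2 => ?_⟩
        rw [heq m (by omega)]
        exact hch₁ m hm1 (by omega)
      rw [heq _ hne1] at h0e
      obtain ⟨k, hk, hkd, hch⟩ := hreg.2 j₀ hj₀ h0e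
      rcases eq_or_ne k p with hkp | hkp
      · exfalso
        rw [hkp] at hkd
        omega
      by_cases hpi : k < p ∧ p < j₀
      · exfalso
        exact hnobad ⟨j₀, hpi.2, hj₀, h0e, fun m hm1 hm2 => hch m (by omega) hm2⟩
      · refine ⟨k, hk, by rw [heq k hkp]; exact hkd, fun m hm1 hm2 => ?_⟩
        rw [heq m (by omega)]
        exact hch m hm1 hm2
  refine finish c e p {p} hlen (by rw [hedef]; exact mem_set_le_three _ _ _ h3 (by omega)) ?_
    hval (by simp) ?_ ?_
  · exact extReg_of_agree e (trim e) (trim_length_le e) (fun k _ => trim_getD e k) hrege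
  · intro k hk
    exact heq k (by simpa using hk)
  · right
    refine ⟨c.length - 1, by omega, ?_⟩
    rw [heq _ (by omega)]
    exact top_nonzero c hlast (by omega)

lemma decpos_v1top (c : List ℕ) (p : ℕ) (h3 : ∀ x ∈ c, x ≤ 3) (hreg : ExtReg c)
    (hlast : c ≠ [] → c.getLastD 0 ≠ 0) (hp : p < c.length) (hv : c.getD p 0 = 1)
    (htop : p + 1 = c.length) : DecResult c p := by
  set e := c.set p 0 with hedef
  have hlen : e.length = c.length := by simp [hedef]
  have he : ∀ k, e.getD k 0 = if k = p then 0 else c.getD k 0 := by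
    intro k
    rw [hedef, getD_set']
    split_ifs <;> omega
  have heq : ∀ k, k ≠ p → e.getD k 0 = c.getD k 0 := by
    intro k h
    rw [he k, if_neg h]
  have hep : e.getD p 0 = 0 := by rw [he]; simp
  have hval : digitVal e + 2 ^ p = digitVal c := by
    have h1 := digitVal_set c p 0 hp
    rw [hv, ← hedef] at h1
    omega
  have htriml : (trim e).length ≤ p := by
    apply trim_length_le_of
    intro m hm
    rcases eq_or_ne m p with rfl | hne
    · exact hep
    · rw [List.getD_eq_default]
      rw [hlen]
      omega
  have hregt : ExtReg (trim e) :=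
    extReg_of_agree c (trim e) (le_trans (trim_length_le e) (le_of_eq hlen))
      (fun k hk => by rw [trim_getD, heq k (by omega)]) hreg
  refine finish c e p {p} hlen (by rw [hedef]; exact mem_set_le_three _ _ _ h3 (by omega))
    hregt hval (by simp) ?_ ?_
  · intro k hk
    exact heq k (by simpa using hk)
  · rcases Nat.lt_or_ge c.length 3 with hsm | hbig
    · rcases Nat.lt_or_ge c.length 2 with h2 | h2
      · left; omega
      · -- length exactly 2
        by_cases hc2 : c.getD (c.length - 2) 0 ≠ 0
        · right
          exact ⟨c.length - 2, by omega, by rw [heq _ (by omega)]; exact hc2⟩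
        · left
          -- c.getD 0 0 = 0 is impossible in a regular string
          exfalso
          push_neg at hc2
          obtain ⟨k, hk, -, -⟩ := hreg.2 (c.length - 2) (by omega)
            (by rwa [show c.length - 2 = 0 by omega] at hc2 ⊢)
          omega
    · right
      by_cases hc2 : c.getD (c.length - 2) 0 ≠ 0
      · exact ⟨c.length - 2, by omega, by rw [heq _ (by omega)]; exact hc2⟩
      · push_neg at hc2
        have h0 : c.getD (c.length - 3) 0 ≠ 0 := by
          intro h0
          have := no_adjacent_zeros c hreg (c.length - 3) h0 (by omega)
          rw [show c.length - 3 + 1 = c.length - 2 by omega] at this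
          exact this hc2
        exact ⟨c.length - 3, by omega, by rw [heq _ (by omega)]; exact h0⟩

lemma decpos_v1nowit (c : List ℕ) (p : ℕ) (h3 : ∀ x ∈ c, x ≤ 3) (hreg : ExtReg c)
    (hlast : c ≠ [] → c.getLastD 0 ≠ 0) (hp : p + 1 < c.length) (hv : c.getD p 0 = 1)
    (hnowit : ¬∃ k₁, k₁ < p ∧ (c.getD k₁ 0 = 2 ∨ c.getD k₁ 0 = 3) ∧
      ∀ m, k₁ < m → m < p → c.getD m 0 = 1) : DecResult c p := by
  have hwnz : c.getD (p+1) 0 ≠ 0 := by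
    intro h0
    obtain ⟨k, hk, hkd, hch⟩ := hreg.2 (p+1) hp h0
    rcases eq_or_ne k p with hkp | hkp
    · rw [hkp] at hkd
      omega
    · exact hnowit ⟨k, by omega, hkd, fun m hm1 hm2 => hch m hm1 (by omega)⟩
  obtain ⟨w, hwdef⟩ : ∃ w, w = c.getD (p+1) 0 := ⟨_, rfl⟩
  have hw1 : 1 ≤ w := by omega
  have hw3 : w ≤ 3 := by
    have := getD_le_three c h3 (p+1)
    omega
  set e := (c.set p 2).set (p+1) (w-1) with hedef
  have hlen : e.length = c.length := by simp [hedef]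
  have he : ∀ k, e.getD k 0
      = if k = p then 2 else if k = p+1 then w - 1 else c.getD k 0 := by
    intro k
    rw [hedef, getD_set', getD_set']
    simp only [List.length_set]
    split_ifs <;> omega
  have heq : ∀ k, k ≠ p → k ≠ p+1 → e.getD k 0 = c.getD k 0 := by
    intro k h1 h2
    rw [he k, if_neg h1, if_neg h2]
  have hep : e.getD p 0 = 2 := by rw [he]; simp
  have hej1 : e.getD (p+1) 0 = w - 1 := by
    rw [he (p+1), if_neg (by omega), if_pos rfl]
  have hmem : ∀ x ∈ e, x ≤ 3 := by
    rw [hedef]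
    exact mem_set_le_three _ _ _ (mem_set_le_three _ _ _ h3 (by omega)) (by omega)
  have hval : digitVal e + 2 ^ p = digitVal c := by
    have h1 := digitVal_set c p 2 (by omega)
    rw [hv] at h1
    have h2 := digitVal_set (c.set p 2) (p+1) (w-1) (by simp; omega)
    rw [getD_set', if_neg (by omega), ← hwdef, ← hedef] at h2
    have hpow : 2 ^ (p+1) = 2 * 2 ^ p := by rw [pow_succ]; ring
    rcases (by omega : w = 1 ∨ w = 2 ∨ w = 3) with rfl | rfl | rfl <;> omega
  have hrege : ExtReg e := by
    constructor
    · intro j₀ hj₀ h3e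
      rw [hlen] at hj₀
      rcases eq_or_ne j₀ p with rfl | hne1
      · rw [hep] at h3e; omega
      rcases eq_or_ne j₀ (p+1) with rfl | hne2
      · rw [hej1] at h3e; omega
      rw [heq _ hne1 hne2] at h3e
      obtain ⟨k, hk, hkd, hch⟩ := hreg.1 j₀ hj₀ h3e
      rcases eq_or_ne k p with hkp | hkp
      · rw [hkp] at hk hch
        have hcp1 : c.getD (p+1) 0 = 2 := hch (p+1) (by omega) (by omega)
        refine ⟨p+1, by omega, Or.inr (by rw [hej1]; omega), fun m hm1 hm2 => ?_⟩
        rw [heq m (by omega) (by omega)]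
        exact hch m (by omega) hm2
      rcases eq_or_ne k (p+1) with hkp1 | hkp1
      · rw [hkp1] at hk hkd hch
        refine ⟨p+1, hk, Or.inl (by rw [hej1]; omega), fun m hm1 hm2 => ?_⟩
        rw [heq m (by omega) (by omega)]
        exact hch m hm1 hm2
      by_cases hpi : k < p ∧ p < j₀
      · exfalso
        have := hch p hpi.1 hpi.2
        omega
      · have hside : p < k ∨ j₀ ≤ p := by omega
        have hp1ni : p + 1 ≤ k ∨ j₀ ≤ p + 1 := by omega
        refine ⟨k, hk, by rw [heq k hkp hkp1]; exact hkd, fun m hm1 hm2 => ?_⟩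
        rw [heq m (by omega) (by omega)]
        exact hch m hm1 hm2
    · intro j₀ hj₀ h0e
      rw [hlen] at hj₀
      rcases eq_or_ne j₀ p with rfl | hne1
      · rw [hep] at h0e; omega
      rcases eq_or_ne j₀ (p+1) with rfl | hne2
      · exact ⟨p, by omega, Or.inl hep, fun m hm1 hm2 => by omega⟩
      rw [heq _ hne1 hne2] at h0e
      obtain ⟨k, hk, hkd, hch⟩ := hreg.2 j₀ hj₀ h0e
      rcases eq_or_ne k p with hkp | hkp
      · exfalso
        rw [hkp] at hkd
        omega
      rcases eq_or_ne k (p+1) with hkp1 | hkp1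
      · rw [hkp1] at hk hkd hch
        rcases hkd with h2 | h3x
        · refine ⟨p, by omega, Or.inl hep, fun m hm1 hm2 => ?_⟩
          rcases eq_or_ne m (p+1) with rfl | hmne
          · rw [hej1]; omega
          · rw [heq m (by omega) hmne]
            exact hch m (by omega) hm2
        · refine ⟨p+1, hk, Or.inl (by rw [hej1]; omega), fun m hm1 hm2 => ?_⟩
          rw [heq m (by omega) (by omega)]
          exact hch m hm1 hm2
      by_cases hpi : k < p ∧ p < j₀
      · exfalso
        exact hnowit ⟨k, hpi.1, hkd, fun m hm1 hm2 => hch m hm1 (by omega)⟩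
      · have hside : p < k ∨ j₀ ≤ p := by omega
        have hp1ni : p + 1 ≤ k ∨ j₀ ≤ p + 1 := by omega
        refine ⟨k, hk, by rw [heq k hkp hkp1]; exact hkd, fun m hm1 hm2 => ?_⟩
        rw [heq m (by omega) (by omega)]
        exact hch m hm1 hm2
  have hcard : ({p, p+1} : Finset ℕ).card ≤ 3 := by
    have h1 := Finset.card_insert_le p ({p+1} : Finset ℕ)
    have h3c : ({p+1} : Finset ℕ).card = 1 := Finset.card_singleton _
    omega
  refine finish c e p {p, p+1} hlen hmem ?_ hval hcard ?_ ?_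
  · exact extReg_of_agree e (trim e) (trim_length_le e) (fun k _ => trim_getD e k) hrege
  · intro k hk
    simp only [Finset.mem_insert, Finset.mem_singleton] at hk
    push_neg at hk
    exact heq k hk.1 hk.2
  · right
    rcases eq_or_ne (p+1) (c.length - 1) with h | h
    · exact ⟨p, by omega, by rw [hep]; omega⟩
    · refine ⟨c.length - 1, by omega, ?_⟩
      rw [heq _ (by omega) (by omega)]
      exact top_nonzero c hlast (by omega)

lemma decpos (c : List ℕ) (p : ℕ) (h3 : ∀ x ∈ c, x ≤ 3) (hreg : ExtReg c)
    (hlast : c ≠ [] → c.getLastD 0 ≠ 0) (hp : p < c.length) (hv : 1 ≤ c.getD p 0) :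
    DecResult c p := by
  have hv3 : c.getD p 0 ≤ 3 := getD_le_three c h3 p
  rcases (by omega : c.getD p 0 = 1 ∨ c.getD p 0 = 2 ∨ c.getD p 0 = 3) with h1 | h2 | h3v
  · rcases eq_or_ne (p+1) c.length with htop | hne
    · exact decpos_v1top c p h3 hreg hlast hp h1 htop
    · have hp1 : p + 1 < c.length := by omega
      by_cases hbad : ∃ j, p < j ∧ j < c.length ∧ c.getD j 0 = 0 ∧
          ∀ m, p < m → m < j → c.getD m 0 = 1
      · obtain ⟨j, hj1, hj2, hj3, hj4⟩ := hbad
        exact decpos_v1bad c p j h3 hreg hlast hp h1 hj1 hj2 hj3 hj4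
      · by_cases hwit : ∃ k₁, k₁ < p ∧ (c.getD k₁ 0 = 2 ∨ c.getD k₁ 0 = 3) ∧
            ∀ m, k₁ < m → m < p → c.getD m 0 = 1
        · exact decpos_v1wit c p h3 hreg hlast hp1 h1 hbad hwit
        · exact decpos_v1nowit c p h3 hreg hlast hp1 h1 hwit
  · by_cases hbad : ∃ j, p < j ∧ j < c.length ∧ c.getD j 0 = 0 ∧
        ∀ m, p < m → m < j → c.getD m 0 = 1
    · obtain ⟨j, hj1, hj2, hj3, hj4⟩ := hbad
      exact decpos_v2bad c p j h3 hreg hlast hp h2 hj1 hj2 hj3 hj4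
    · exact decpos_v2nobad c p h3 hreg hlast hp h2 hbad
  · exact decpos_v3 c p h3 hreg hlast hp h3v

lemma set01 (c : List ℕ) (hreg : ExtReg c) (i : ℕ) (hi : i < c.length)
    (h0 : c.getD i 0 = 0) : ExtReg (c.set i 1) := by
  set e := c.set i 1 with hedef
  have hlen : e.length = c.length := by simp [hedef]
  have he : ∀ k, e.getD k 0 = if k = i then 1 else c.getD k 0 := by
    intro k
    rw [hedef, getD_set']
    split_ifs <;> omega
  have heq : ∀ k, k ≠ i → e.getD k 0 = c.getD k 0 := by
    intro k h
    rw [he k, if_neg h]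
  have hei : e.getD i 0 = 1 := by rw [he]; simp
  constructor
  · intro j₀ hj₀ h3e
    rw [hlen] at hj₀
    rcases eq_or_ne j₀ i with rfl | hne1
    · rw [hei] at h3e; omega
    rw [heq _ hne1] at h3e
    obtain ⟨k, hk, hkd, hch⟩ := hreg.1 j₀ hj₀ h3e
    rcases eq_or_ne k i with hki | hki
    · rw [hki] at hk hch
      refine ⟨i, hk, Or.inr hei, fun m hm1 hm2 => ?_⟩
      rw [heq m (by omega)]
      exact hch m hm1 hm2
    by_cases hpi : k < i ∧ i < j₀
    · exfalso
      have := hch i hpi.1 hpi.2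
      omega
    · refine ⟨k, hk, by rw [heq k hki]; exact hkd, fun m hm1 hm2 => ?_⟩
      rw [heq m (by omega)]
      exact hch m hm1 hm2
  · intro j₀ hj₀ h0e
    rw [hlen] at hj₀
    rcases eq_or_ne j₀ i with rfl | hne1
    · rw [hei] at h0e; omega
    rw [heq _ hne1] at h0e
    obtain ⟨k, hk, hkd, hch⟩ := hreg.2 j₀ hj₀ h0e
    rcases eq_or_ne k i with hki | hki
    · exfalso
      rw [hki] at hkd
      omega
    by_cases hpi : k < i ∧ i < j₀
    · exfalso
      have := hch i hpi.1 hpi.2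
      omega
    · refine ⟨k, hk, by rw [heq k hki]; exact hkd, fun m hm1 hm2 => ?_⟩
      rw [heq m (by omega)]
      exact hch m hm1 hm2

lemma diffCount_le (d d' : List ℕ) (S : Finset ℕ)
    (h : ∀ k, k ∉ S → d.getD k 0 = d'.getD k 0) : diffCount d d' ≤ S.card := by
  apply Finset.card_le_card
  intro k hk
  simp only [Finset.mem_filter, Finset.mem_range] at hk
  by_contra hks
  exact hk.2 (h k hks)


/-- Decrementing digit `i` of an extended regular counter: from an extended
regular representation `d` of `n` and an index `i ≤ ℓ - 1` (i.e. `i < ℓ`), we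
have `2^i ≤ n`, and one obtains an extended regular representation of `n - 2^i`
whose length is between `ℓ - 2` and `ℓ` and which differs from `d` in at most
`4` positions. -/
theorem stmt_12 (d : List ℕ) (n i : ℕ) (hd : IsExtRegRep d n)
    (hi : i < d.length) :
    2 ^ i ≤ n ∧
      ∃ d' : List ℕ, IsExtRegRep d' (n - 2 ^ i) ∧
        d.length - 2 ≤ d'.length ∧ d'.length ≤ d.length ∧ diffCount d d' ≤ 4 := by
  obtain ⟨hmem, hreg, hlast, hval⟩ := hd
  have htop : d.getD (d.length - 1) 0 ≠ 0 := top_nonzero d hlast (by omega)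
  have h2n : 2 ^ i ≤ n := by
    have h1 : d.getD (d.length - 1) 0 * 2 ^ (d.length - 1) ≤ digitVal d :=
      getD_le_digitVal d _ (by omega)
    calc 2 ^ i ≤ 2 ^ (d.length - 1) := Nat.pow_le_pow_right (by norm_num) (by omega)
    _ ≤ d.getD (d.length - 1) 0 * 2 ^ (d.length - 1) := Nat.le_mul_of_pos_left _ (by omega)
    _ ≤ digitVal d := h1
    _ = n := hval
  refine ⟨h2n, ?_⟩
  by_cases h0 : d.getD i 0 = 0
  · have hi1 : i + 1 < d.length := zero_lt_last d hlast i hi h0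
    set c := d.set i 1 with hcdef
    have hclen : c.length = d.length := by simp [hcdef]
    have hcreg : ExtReg c := set01 d hreg i hi h0
    have hcmem : ∀ x ∈ c, x ≤ 3 := mem_set_le_three d i 1 hmem (by omega)
    have hceq : ∀ k, k ≠ i → c.getD k 0 = d.getD k 0 := by
      intro k h
      rw [hcdef, getD_set', if_neg (by omega)]
    have hclast : c ≠ [] → c.getLastD 0 ≠ 0 := by
      intro hne
      rw [getLastD_eq_getD _ hne, hclen, hceq _ (by omega)]
      exact htop
    have hcval : digitVal c = n + 2 ^ i := by
      have h1 := digitVal_set d i 1 hi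
      rw [h0, ← hcdef] at h1
      omega
    have hcv1 : 1 ≤ c.getD (i+1) 0 := by
      have := no_adjacent_zeros d hreg i h0 hi1
      rw [hceq (i+1) (by omega)]
      omega
    obtain ⟨d', S', hd3, hdreg, hdlast, hdval, hlen1, hlen2, hScard, hSag⟩ :=
      decpos c (i+1) hcmem hcreg hclast (by omega) hcv1
    have hpow : 2 ^ (i+1) = 2 * 2 ^ i := by rw [pow_succ]; ring
    refine ⟨d', ⟨hd3, hdreg, hdlast, by rw [hcval] at hdval; omega⟩, by omega, by omega, ?_⟩
    have hsub : ∀ k, k ∉ insert i S' → d.getD k 0 = d'.getD k 0 := by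
      intro k hk
      simp only [Finset.mem_insert] at hk
      push_neg at hk
      rw [hSag k hk.2, hceq k hk.1]
    calc diffCount d d' ≤ (insert i S').card := diffCount_le d d' _ hsub
    _ ≤ S'.card + 1 := Finset.card_insert_le _ _
    _ ≤ 4 := by omega
  · obtain ⟨d', S', hd3, hdreg, hdlast, hdval, hlen1, hlen2, hScard, hSag⟩ :=
      decpos d i hmem hreg hlast hi (by omega)
    refine ⟨d', ⟨hd3, hdreg, hdlast, by omega⟩, hlen1, hlen2, ?_⟩
    calc diffCount d d' ≤ S'.card := diffCount_le d d' S' (fun k hk => (hSag k hk).symm)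
    _ ≤ 4 := by omega
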